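/- For every natural number n, the triple sum over k = 0..n, l = 0..n, m = 0..n of C(n,k) · C(n,l) · C(m,k) · C(m,l) · C(k+l,k) · C(n,m)^2 equals the double sum over k = 0..n and l = 0..n of C(n,k)^2 · C(n,l)^2 · C(k+l,n)^2. (This is the equality of the two expressions for A_n in case #28 of the table.) -/

import Mathlib

open Finset

/-- Vandermonde's identity as a range sum. -/
lemma vand_range (x y k : ℕ) :
    (x + y).choose k = ∑ i ∈ range (k + 1), x.choose i * y.choose (k - i) := by
  rw [Nat.add_choose_eq, Finset.Nat.sum_antidiagonal_eq_sum_range_succ_mk]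

lemma choose_twist {n m b : ℕ} (hm : m ≤ n) :
    n.choose m * m.choose b = n.choose b * (n - b).choose (n - m) := by
  rcases le_or_gt b m with hbm | hbm
  · rw [Nat.choose_mul hbm]
    congr 1
    exact Nat.choose_symm_of_eq_add (by omega)
  · rw [Nat.choose_eq_zero_of_lt hbm, Nat.mul_zero]
    rcases le_or_gt b n with hbn | hbn
    · rw [Nat.choose_eq_zero_of_lt (show n - b < n - m by omega), Nat.mul_zero]
    · rw [Nat.choose_eq_zero_of_lt hbn, Nat.zero_mul]

/-- Key lemma: ∑_m C(n,m)^2 C(m,a) C(m,b) = C(n,a) C(n,b) C((n-a)+(n-b), n-a). -/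
lemma keyA (n a b : ℕ) (ha : a ≤ n) (hb : b ≤ n) :
    ∑ m ∈ range (n + 1), n.choose m ^ 2 * (m.choose a * m.choose b)
      = n.choose a * n.choose b * ((n - a) + (n - b)).choose (n - a) := by
  have h1 : ∑ m ∈ range (n + 1), n.choose m ^ 2 * (m.choose a * m.choose b)
      = ∑ m ∈ Icc a n, n.choose m ^ 2 * (m.choose a * m.choose b) := by
    symm
    apply Finset.sum_subset
    · intro x hx
      simp only [Finset.mem_Icc] at hx
      simp only [Finset.mem_range]
      omega
    · intro x hx hnx
      simp only [Finset.mem_Icc] at hnx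
      simp only [Finset.mem_range] at hx
      have : x < a := by omega
      rw [Nat.choose_eq_zero_of_lt this]
      ring
  have h2 : ∀ m ∈ Icc a n, n.choose m ^ 2 * (m.choose a * m.choose b)
      = (n.choose a * n.choose b) * ((n - a).choose (m - a) * (n - b).choose (n - m)) := by
    intro m hm
    simp only [Finset.mem_Icc] at hm
    have e1 : n.choose m * m.choose a = n.choose a * (n - a).choose (m - a) :=
      Nat.choose_mul hm.1
    have e2 : n.choose m * m.choose b = n.choose b * (n - b).choose (n - m) :=
      choose_twist hm.2
    calc n.choose m ^ 2 * (m.choose a * m.choose b)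
        = (n.choose m * m.choose a) * (n.choose m * m.choose b) := by ring
      _ = (n.choose a * (n - a).choose (m - a)) * (n.choose b * (n - b).choose (n - m)) := by
          rw [e1, e2]
      _ = (n.choose a * n.choose b) * ((n - a).choose (m - a) * (n - b).choose (n - m)) := by
          ring
  rw [h1, Finset.sum_congr rfl h2, ← Finset.mul_sum]
  congr 1
  have h3 : Icc a n = Ico a (n + 1) := by
    rw [Finset.Ico_add_one_right_eq_Icc]
  rw [h3, Finset.sum_Ico_eq_sum_range]
  have h4 : n + 1 - a = (n - a) + 1 := by omega
  rw [h4, vand_range]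
  refine Finset.sum_congr rfl fun i hi => ?_
  simp only [Finset.mem_range] at hi
  congr 2
  · omega
  · omega

theorem stmt_9 (n : ℕ) :
    (∑ k ∈ Finset.range (n + 1), ∑ l ∈ Finset.range (n + 1), ∑ m ∈ Finset.range (n + 1),
      n.choose k * n.choose l * m.choose k * m.choose l * Nat.choose (k + l) k *
        (n.choose m) ^ 2) =
    ∑ k ∈ Finset.range (n + 1), ∑ l ∈ Finset.range (n + 1),
      (n.choose k) ^ 2 * (n.choose l) ^ 2 * (Nat.choose (k + l) n) ^ 2 := by
  have hLHS : (∑ k ∈ Finset.range (n + 1), ∑ l ∈ Finset.range (n + 1),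
        ∑ m ∈ Finset.range (n + 1),
        n.choose k * n.choose l * m.choose k * m.choose l * Nat.choose (k + l) k *
          (n.choose m) ^ 2)
      = ∑ k ∈ range (n + 1), ∑ l ∈ range (n + 1),
        (n.choose k * n.choose l * ((n - k) + (n - l)).choose (n - k)) *
          (n.choose k * n.choose l * (k + l).choose k) := by
    refine Finset.sum_congr rfl fun k hk => Finset.sum_congr rfl fun l hl => ?_
    simp only [Finset.mem_range] at hk hl
    have hk' : k ≤ n := by omega
    have hl' : l ≤ n := by omega
    have : (∑ m ∈ Finset.range (n + 1),
        n.choose k * n.choose l * m.choose k * m.choose l * Nat.choose (k + l) k *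
          (n.choose m) ^ 2)
        = (n.choose k * n.choose l * (k + l).choose k) *
          ∑ m ∈ range (n + 1), n.choose m ^ 2 * (m.choose k * m.choose l) := by
      rw [Finset.mul_sum]
      exact Finset.sum_congr rfl fun m _ => by ring
    rw [this, keyA n k l hk' hl']
    ring
  rw [hLHS]
  -- Now transform the RHS
  have hRHS : (∑ k ∈ Finset.range (n + 1), ∑ l ∈ Finset.range (n + 1),
        (n.choose k) ^ 2 * (n.choose l) ^ 2 * (Nat.choose (k + l) n) ^ 2)
      = ∑ a ∈ range (n + 1), ∑ b ∈ range (n + 1),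
        (∑ k ∈ range (n + 1), n.choose k ^ 2 * (k.choose a * k.choose b)) *
          (∑ l ∈ range (n + 1), n.choose l ^ 2 * (l.choose (n - a) * l.choose (n - b))) := by
    have step1 : ∀ k l : ℕ,
        (n.choose k) ^ 2 * (n.choose l) ^ 2 * (Nat.choose (k + l) n) ^ 2
        = ∑ a ∈ range (n + 1), ∑ b ∈ range (n + 1),
            (n.choose k ^ 2 * (k.choose a * k.choose b)) *
              (n.choose l ^ 2 * (l.choose (n - a) * l.choose (n - b))) := by
      intro k l
      rw [sq (Nat.choose (k + l) n), vand_range k l n, Finset.sum_mul_sum]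
      rw [Finset.mul_sum]
      refine Finset.sum_congr rfl fun a _ => ?_
      rw [Finset.mul_sum]
      refine Finset.sum_congr rfl fun b _ => ?_
      ring
    calc (∑ k ∈ Finset.range (n + 1), ∑ l ∈ Finset.range (n + 1),
          (n.choose k) ^ 2 * (n.choose l) ^ 2 * (Nat.choose (k + l) n) ^ 2)
        = ∑ k ∈ range (n + 1), ∑ l ∈ range (n + 1), ∑ a ∈ range (n + 1), ∑ b ∈ range (n + 1),
            (n.choose k ^ 2 * (k.choose a * k.choose b)) *
              (n.choose l ^ 2 * (l.choose (n - a) * l.choose (n - b))) := by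
          exact Finset.sum_congr rfl fun k _ => Finset.sum_congr rfl fun l _ => step1 k l
      _ = ∑ a ∈ range (n + 1), ∑ b ∈ range (n + 1), ∑ k ∈ range (n + 1), ∑ l ∈ range (n + 1),
            (n.choose k ^ 2 * (k.choose a * k.choose b)) *
              (n.choose l ^ 2 * (l.choose (n - a) * l.choose (n - b))) := by
          calc (∑ k ∈ range (n + 1), ∑ l ∈ range (n + 1), ∑ a ∈ range (n + 1),
                ∑ b ∈ range (n + 1),
                (n.choose k ^ 2 * (k.choose a * k.choose b)) *
                  (n.choose l ^ 2 * (l.choose (n - a) * l.choose (n - b))))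
              = ∑ k ∈ range (n + 1), ∑ a ∈ range (n + 1), ∑ l ∈ range (n + 1),
                ∑ b ∈ range (n + 1),
                (n.choose k ^ 2 * (k.choose a * k.choose b)) *
                  (n.choose l ^ 2 * (l.choose (n - a) * l.choose (n - b))) :=
              Finset.sum_congr rfl fun k _ => Finset.sum_comm
            _ = ∑ a ∈ range (n + 1), ∑ k ∈ range (n + 1), ∑ l ∈ range (n + 1),
                ∑ b ∈ range (n + 1),
                (n.choose k ^ 2 * (k.choose a * k.choose b)) *
                  (n.choose l ^ 2 * (l.choose (n - a) * l.choose (n - b))) :=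
              Finset.sum_comm
            _ = ∑ a ∈ range (n + 1), ∑ k ∈ range (n + 1), ∑ b ∈ range (n + 1),
                ∑ l ∈ range (n + 1),
                (n.choose k ^ 2 * (k.choose a * k.choose b)) *
                  (n.choose l ^ 2 * (l.choose (n - a) * l.choose (n - b))) :=
              Finset.sum_congr rfl fun a _ => Finset.sum_congr rfl fun k _ => Finset.sum_comm
            _ = ∑ a ∈ range (n + 1), ∑ b ∈ range (n + 1), ∑ k ∈ range (n + 1),
                ∑ l ∈ range (n + 1),
                (n.choose k ^ 2 * (k.choose a * k.choose b)) *
                  (n.choose l ^ 2 * (l.choose (n - a) * l.choose (n - b))) :=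
              Finset.sum_congr rfl fun a _ => Finset.sum_comm
      _ = ∑ a ∈ range (n + 1), ∑ b ∈ range (n + 1),
          (∑ k ∈ range (n + 1), n.choose k ^ 2 * (k.choose a * k.choose b)) *
            (∑ l ∈ range (n + 1), n.choose l ^ 2 * (l.choose (n - a) * l.choose (n - b))) := by
          refine Finset.sum_congr rfl fun a _ => Finset.sum_congr rfl fun b _ => ?_
          rw [Finset.sum_mul_sum]
  rw [hRHS]
  refine Finset.sum_congr rfl fun a ha => Finset.sum_congr rfl fun b hb => ?_
  simp only [Finset.mem_range] at ha hb
  have ha' : a ≤ n := by omega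
  have hb' : b ≤ n := by omega
  rw [keyA n a b ha' hb', keyA n (n - a) (n - b) (Nat.sub_le n a) (Nat.sub_le n b)]
  rw [Nat.sub_sub_self ha', Nat.sub_sub_self hb', Nat.choose_symm ha', Nat.choose_symm hb']
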